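/- Fix k ≥ 0 and let α ∈ (0,1) and α' > 1 be the unique real roots of P_k in those intervals. Suppose P_k factorizes in ℤ[q] as a product P_k = P_{k,1} ⋯ P_{k,r} of irreducible polynomials, and suppose P_{k,1}(α) = 0. Then P_{k,1}(α') = 0, and for every i ≥ 2, every complex root of P_{k,i} is a root of unity. -/

import Mathlib

open Polynomial Real Complex

/-- For `k ≥ 1`, the polynomial `P_{k-1}(q) = 1 + ∑_{l=1}^{k} (q⁴−q³−q²−q)·q^{4(l−1)}`,
here `Pm1 k` denotes `P_{k-1}`, so `P_k = Pm1 (k+1)`. -/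
noncomputable def Pm1 (k : ℕ) : Polynomial ℤ :=
  1 + ∑ l ∈ Finset.range k, (X ^ 4 - X ^ 3 - X ^ 2 - X) * X ^ (4 * l)

lemma pm1_succ (n : ℕ) : Pm1 (n+1) = X^(4*n+4) + (Pm1 n - (X^3+X^2+X) * X^(4*n)) := by
  simp only [Pm1, Finset.sum_range_succ]
  ring

lemma pm1_monic (n : ℕ) : (Pm1 n).Monic ∧ (Pm1 n).natDegree = 4*n := by
  induction n with
  | zero => simp [Pm1, monic_one]
  | succ n ih =>
    obtain ⟨hm, hd⟩ := ih
    have hdeg : (Pm1 n - (X^3+X^2+X) * (X:ℤ[X])^(4*n)).degree < ((X:ℤ[X])^(4*n+4)).degree := by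
      rw [degree_X_pow]
      refine lt_of_le_of_lt (degree_sub_le _ _) ?_
      rw [sup_lt_iff]
      constructor
      · refine lt_of_le_of_lt degree_le_natDegree ?_
        rw [hd]; exact_mod_cast by omega
      · refine lt_of_le_of_lt (degree_mul_le _ _) ?_
        rw [degree_X_pow]
        have h3 : ((X:ℤ[X])^3+X^2+X).degree ≤ 3 := by compute_degree
        refine lt_of_le_of_lt (add_le_add_left h3 _) ?_
        rw [show ((3:WithBot ℕ)) = ((3:ℕ):WithBot ℕ) by rfl, ← Nat.cast_add]
        exact_mod_cast by omega
    refine ⟨?_, ?_⟩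
    · rw [pm1_succ]
      exact (monic_X_pow _).add_of_left hdeg
    · rw [pm1_succ, natDegree_add_eq_left_of_degree_lt (by simpa using hdeg)]
      rw [natDegree_X_pow]; omega

lemma pm1_eval_zero (n : ℕ) : (Pm1 n).eval 0 = 1 := by
  simp [Pm1, eval_finset_sum]

lemma pm1_eval_c (n : ℕ) (z : ℂ) :
    (z^4-1) * (aeval z (Pm1 n)) =
      z^(4*n+4) - z^(4*n+3) - z^(4*n+2) - z^(4*n+1) + z^3 + z^2 + z - 1 := by
  induction n with
  | zero => simp [Pm1]; ring
  | succ n ih =>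
    have : (aeval z (Pm1 (n+1))) = aeval z (Pm1 n) + (z^4-z^3-z^2-z) * z^(4*n) := by
      simp [Pm1, Finset.sum_range_succ]; ring
    rw [this, mul_add, ih]
    ring


noncomputable def hfun (n : ℕ) (ψ : ℝ) : ℝ :=
  Real.cos (((4*n+1 : ℕ) : ℝ) * ψ) * Real.sin (((3:ℕ) : ℝ) * ψ)
    - Real.sin (((4*n+1 : ℕ) : ℝ) * ψ) * Real.cos (((1:ℕ) : ℝ) * ψ)

lemma Hval (n : ℕ) (ψ : ℝ) :
    (Complex.exp ((2*ψ : ℝ) * Complex.I))^(4*n+4)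
      - (Complex.exp ((2*ψ : ℝ) * Complex.I))^(4*n+3)
      - (Complex.exp ((2*ψ : ℝ) * Complex.I))^(4*n+2)
      - (Complex.exp ((2*ψ : ℝ) * Complex.I))^(4*n+1)
      + (Complex.exp ((2*ψ : ℝ) * Complex.I))^3
      + (Complex.exp ((2*ψ : ℝ) * Complex.I))^2
      + (Complex.exp ((2*ψ : ℝ) * Complex.I)) - 1
    = 4 * Complex.I * (Complex.exp ((ψ:ℝ) * Complex.I))^(4*n+4) * (hfun n ψ) := by
  set u := Complex.exp ((ψ:ℝ) * Complex.I) with hu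
  have hunz : u ≠ 0 := Complex.exp_ne_zero _
  have e1 : ∀ c : ℕ, Complex.exp (((c * ψ : ℝ) : ℂ) * Complex.I) = u^c := by
    intro c
    rw [hu, ← Complex.exp_nat_mul]
    congr 1; push_cast; ring
  have e2 : ∀ c : ℕ, Complex.exp (-((c * ψ : ℝ) : ℂ) * Complex.I) = (u^c)⁻¹ := by
    intro c
    rw [neg_mul, Complex.exp_neg, e1]
  have hψ : ∀ j : ℕ, (Complex.exp ((2*ψ : ℝ) * Complex.I))^j = u^(2*j) := by
    intro j
    rw [hu, ← Complex.exp_nat_mul, ← Complex.exp_nat_mul]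
    congr 1; push_cast; ring
  have hψ1 : (Complex.exp ((2*ψ : ℝ) * Complex.I)) = u^2 := by simpa using hψ 1
  have hcos : ∀ c : ℕ, ((Real.cos ((c : ℝ) * ψ)) : ℂ) = (u^c + (u^c)⁻¹) / 2 := by
    intro c
    rw [Complex.ofReal_cos, Complex.cos]
    rw [show ((((c:ℝ) * ψ : ℝ)):ℂ) * Complex.I = (((c * ψ : ℝ)):ℂ) * Complex.I by push_cast; ring]
    rw [e1 c, e2 c]
  have hsin : ∀ c : ℕ, ((Real.sin ((c : ℝ) * ψ)) : ℂ) = (u^c - (u^c)⁻¹) / (2 * Complex.I) := by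
    intro c
    rw [Complex.ofReal_sin, Complex.sin]
    rw [show ((((c:ℝ) * ψ : ℝ)):ℂ) * Complex.I = (((c * ψ : ℝ)):ℂ) * Complex.I by push_cast; ring]
    rw [e1 c, e2 c]
    rw [eq_div_iff (by simp [Complex.I_ne_zero] : (2*Complex.I) ≠ 0)]
    have hI2 : Complex.I * Complex.I = -1 := Complex.I_mul_I
    field_simp
    linear_combination (1 - u^c*u^c) * hI2
  set cm := ((Real.cos (((4*n+1 : ℕ) : ℝ) * ψ)) : ℂ) with hcm
  set sm := ((Real.sin (((4*n+1 : ℕ) : ℝ) * ψ)) : ℂ) with hsm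
  set s3 := ((Real.sin (((3 : ℕ) : ℝ) * ψ)) : ℂ) with hs3
  set c1 := ((Real.cos (((1 : ℕ) : ℝ) * ψ)) : ℂ) with hc1
  have hpow : ∀ c : ℕ, u^c ≠ 0 := fun c => pow_ne_zero _ hunz
  have R1 : 2 * u^(4*n+1) * cm = u^(2*(4*n+1)) + 1 := by
    rw [hcm, hcos]; field_simp; ring
  have R2 : 2 * Complex.I * u^3 * s3 = u^(2*3) - 1 := by
    rw [hs3, hsin]; field_simp
  have R3 : 2 * Complex.I * u^(4*n+1) * sm = u^(2*(4*n+1)) - 1 := by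
    rw [hsm, hsin]; field_simp; ring
  have R4 : 2 * u^1 * c1 = u^(2*1) + 1 := by
    rw [hc1, hcos]; field_simp
  have main : ((u^(2*(4*n+4)) - u^(2*(4*n+3)) - u^(2*(4*n+2)) - u^(2*(4*n+1))
      + u^(2*3) + u^(2*2) + u^2 - 1)) * u^(4*n+5)
      = (4 * Complex.I * u^(4*n+4) * (cm * s3 - sm * c1)) * u^(4*n+5) := by
    linear_combination (-(u^(4*n+5) * (2*Complex.I*u^3*s3))) * R1
      - (u^(4*n+5) * (u^(2*(4*n+1))+1)) * R2
      + (u^(4*n+7) * (2*u^1*c1)) * R3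
      + (u^(4*n+7) * (u^(2*(4*n+1))-1)) * R4
  have key := mul_right_cancel₀ (hpow (4*n+5)) main
  simp only [hψ, hψ1]
  simp only [← pow_mul]
  simp only [hfun, Complex.ofReal_sub, Complex.ofReal_mul]
  exact key



noncomputable def apt (n t : ℕ) : ℝ := (2*t+1)*π/(2*(4*n+1))
noncomputable def bpt (n : ℕ) : ℝ := (4*n)*π/(2*(4*n+1))

lemma hfun_cont (n : ℕ) : Continuous (hfun n) := by
  unfold hfun; fun_prop

lemma m_pos (n : ℕ) : (0:ℝ) < 2*(4*n+1) := by positivity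

lemma apt_pos (n t : ℕ) : 0 < apt n t := by
  unfold apt
  have := Real.pi_pos
  positivity

lemma apt_mono (n : ℕ) {t t' : ℕ} (h : t ≤ t') : apt n t ≤ apt n t' := by
  unfold apt
  have hπ := Real.pi_pos
  gcongr ?_ * π / _
  exact_mod_cast by omega

lemma apt_lt (n : ℕ) {t t' : ℕ} (h : t < t') : apt n t < apt n t' := by
  unfold apt
  have hπ := Real.pi_pos
  have hd := m_pos n
  apply div_lt_div_of_pos_right ?_ hd |>.trans_le le_rfl
  have : (t:ℝ) < t' := by exact_mod_cast h
  nlinarith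

lemma cos_nat_pi (t : ℕ) : Real.cos (t * π) = (-1)^t := by
  simpa using Real.cos_nat_mul_pi_sub 0 t

lemma hfun_apt (n t : ℕ) : hfun n (apt n t) = (-1)^(t+1) * Real.cos (apt n t) := by
  have hm : ((4*n+1 : ℕ) : ℝ) * apt n t = t * π + π/2 := by
    unfold apt
    have : (2*(4*n+1) : ℝ) ≠ 0 := by positivity
    field_simp
    push_cast
    ring
  unfold hfun
  rw [hm, Real.sin_add_pi_div_two, Real.cos_add_pi_div_two, Real.sin_nat_mul_pi, cos_nat_pi]
  simp
  ring

lemma hfun_bpt (n : ℕ) (hn : 1 ≤ n) : hfun n (bpt n) < 0 := by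
  have hm : ((4*n+1 : ℕ) : ℝ) * bpt n = n * (2 * π) := by
    unfold bpt
    have : (2*(4*n+1) : ℝ) ≠ 0 := by positivity
    field_simp
    push_cast
    ring
  have hb : hfun n (bpt n) = Real.sin (((3:ℕ):ℝ) * bpt n) := by
    unfold hfun
    rw [hm, Real.cos_nat_mul_two_pi]
    have : Real.sin ((n:ℝ) * (2*π)) = 0 := by
      rw [show (n:ℝ) * (2*π) = (2*n : ℕ) * π by push_cast; ring, Real.sin_nat_mul_pi]
    rw [this]
    ring
  rw [hb]
  have h3b : ((3:ℕ):ℝ) * bpt n = (12*n*π)/(2*(4*n+1)) := by unfold bpt; ring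
  have hπ := Real.pi_pos
  have hlo : π < ((3:ℕ):ℝ) * bpt n := by
    rw [h3b, lt_div_iff₀ (m_pos n)]
    have h1 : (1:ℝ) ≤ n := by exact_mod_cast hn
    nlinarith [mul_pos Real.pi_pos (show (0:ℝ) < 4*(n:ℝ)-2 by nlinarith)]
  have hhi : ((3:ℕ):ℝ) * bpt n < 2*π := by
    rw [h3b, div_lt_iff₀ (m_pos n)]
    have h1 : (0:ℝ) ≤ n := by positivity
    nlinarith [mul_pos Real.pi_pos (show (0:ℝ) < 4*(n:ℝ)+4 by nlinarith)]
  have := Real.sin_pos_of_pos_of_lt_pi (x := ((3:ℕ):ℝ) * bpt n - π) (by linarith) (by linarith)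
  have hflip : Real.sin (((3:ℕ):ℝ) * bpt n) = - Real.sin (((3:ℕ):ℝ) * bpt n - π) := by
    rw [← Real.sin_add_pi]
    ring_nf
  rw [hflip]
  linarith

lemma apt_lt_pi_div_two (n t : ℕ) (h : 2*t+1 < 4*n+1) : apt n t < π/2 := by
  have hπ := Real.pi_pos
  unfold apt
  rw [div_lt_iff₀ (m_pos n)]
  have : (2*t+1 : ℝ) < 4*n+1 := by exact_mod_cast h
  nlinarith

lemma bpt_lt_pi_div_two (n : ℕ) : bpt n < π/2 := by
  have hπ := Real.pi_pos
  unfold bpt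
  rw [div_lt_iff₀ (m_pos n)]
  nlinarith [(by positivity : (0:ℝ) ≤ (n:ℝ))]

lemma apt_lt_bpt (n t : ℕ) (h : 2*t+2 ≤ 4*n) : apt n t < bpt n := by
  have hπ := Real.pi_pos
  unfold apt bpt
  apply div_lt_div_of_pos_right ?_ (m_pos n)
  have : (2*t+2:ℝ) ≤ 4*n := by exact_mod_cast h
  nlinarith

lemma ivt_zero {f : ℝ → ℝ} (hf : Continuous f) {a b : ℝ} (hab : a < b)
    (hs : f a * f b < 0) : ∃ c, c ∈ Set.Ioo a b ∧ f c = 0 := by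
  rcases mul_neg_iff.1 hs with ⟨ha, hb⟩ | ⟨ha, hb⟩
  · have h0 : (0:ℝ) ∈ Set.Ioo (f b) (f a) := ⟨hb, ha⟩
    have := intermediate_value_Ioo' hab.le hf.continuousOn h0
    obtain ⟨c, hc, hfc⟩ := this
    exact ⟨c, hc, hfc⟩
  · have h0 : (0:ℝ) ∈ Set.Ioo (f a) (f b) := ⟨ha, hb⟩
    have := intermediate_value_Ioo hab.le hf.continuousOn h0
    obtain ⟨c, hc, hfc⟩ := this
    exact ⟨c, hc, hfc⟩

lemma apt_lt_pi_div_four (n t : ℕ) (h : 4*(2*t+1) < 8*n+2) : apt n t < π/4 := by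
  have hπ := Real.pi_pos
  unfold apt
  rw [div_lt_iff₀ (m_pos n)]
  have : (4*(2*t+1):ℝ) < 8*n+2 := by exact_mod_cast h
  nlinarith

lemma pi_div_four_lt_apt (n t : ℕ) (h : 8*n+2 < 4*(2*t+1)) : π/4 < apt n t := by
  have hπ := Real.pi_pos
  unfold apt
  rw [lt_div_iff₀ (m_pos n)]
  have : (8*n+2:ℝ) < 4*(2*t+1) := by exact_mod_cast h
  nlinarith

lemma cos_apt_pos (n t : ℕ) (h : 2*t+1 < 4*n+1) : 0 < Real.cos (apt n t) := by
  apply Real.cos_pos_of_mem_Ioo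
  constructor
  · linarith [apt_pos n t, Real.pi_pos]
  · exact apt_lt_pi_div_two n t h

lemma exists_zeros (n : ℕ) (hn : 1 ≤ n) :
    ∃ c : ℕ → ℝ,
      (∀ s, s < 2*n-1 →
        (c s ∈ Set.Ioo 0 (π/2) ∧ c s ≠ π/4 ∧ hfun n (c s) = 0)) ∧
      (∀ s s', s < s' → s' < 2*n-1 → c s < c s') := by
  classical
  set J : ℕ → ℕ := fun s => if s + 2 ≤ n then s else s + 1 with hJ
  set lo : ℕ → ℝ := fun s => apt n (J s) with hlo
  set hi : ℕ → ℝ := fun s => if s = 2*n-2 then bpt n else apt n (J s + 1) with hhi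
  have hJle : ∀ s, s < 2*n-1 → J s ≤ 2*n-1 := by
    intro s hs; simp only [hJ]; split_ifs <;> omega
  have hJlt : ∀ s, s < 2*n-1 → s ≠ 2*n-2 → J s ≤ 2*n-2 := by
    intro s hs hne; simp only [hJ]; split_ifs <;> omega
  have hlohi : ∀ s, s < 2*n-1 → lo s < hi s := by
    intro s hs
    simp only [hlo, hhi]
    split_ifs with he
    · have hJs : J s = 2*n-1 := by simp only [hJ]; split_ifs <;> omega
      rw [hJs]
      exact apt_lt_bpt n _ (by omega)
    · exact apt_lt n (by omega)
  have hsign : ∀ s, s < 2*n-1 → hfun n (lo s) * hfun n (hi s) < 0 := by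
    intro s hs
    simp only [hlo, hhi]
    split_ifs with he
    · have hJs : J s = 2*n-1 := by simp only [hJ]; split_ifs <;> omega
      rw [hfun_apt, hJs]
      have h1 : ((-1:ℝ))^(2*n-1+1) = 1 := by
        have : 2*n-1+1 = 2*n := by omega
        rw [this]
        exact (even_two_mul n).neg_one_pow
      rw [h1, one_mul]
      have hcos : 0 < Real.cos (apt n (2*n-1)) := cos_apt_pos n _ (by omega)
      have hb := hfun_bpt n hn
      nlinarith
    · rw [hfun_apt, hfun_apt]
      have hc1 : 0 < Real.cos (apt n (J s)) := cos_apt_pos n _ (by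
        have := hJlt s hs he; omega)
      have hc2 : 0 < Real.cos (apt n (J s + 1)) := cos_apt_pos n _ (by
        have := hJlt s hs he; omega)
      have : ((-1:ℝ))^(J s+1) * ((-1:ℝ))^(J s+1+1) = -1 := by
        rw [← pow_add]
        have : ((-1:ℝ))^(J s+1+(J s+1+1)) = ((-1:ℝ))^(2*(J s + 1)+1) := by ring_nf
        rw [this, pow_succ, (even_two_mul (J s + 1)).neg_one_pow]
        ring
      nlinarith [mul_pos hc1 hc2, this]
  have hmem : ∀ s, s < 2*n-1 → Set.Ioo (lo s) (hi s) ⊆ Set.Ioo 0 (π/2) := by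
    intro s hs x hx
    constructor
    · have := apt_pos n (J s); simp only [hlo] at hx; linarith [hx.1]
    · have hhi2 : hi s ≤ π/2 := by
        simp only [hhi]; split_ifs with he
        · exact (bpt_lt_pi_div_two n).le
        · exact (apt_lt_pi_div_two n _ (by have := hJlt s hs he; omega)).le
      linarith [hx.2]
  have hquarter : ∀ s, s < 2*n-1 → π/4 ∉ Set.Ioo (lo s) (hi s) := by
    intro s hs hqin
    by_cases hb : s + 2 ≤ n
    · -- interval entirely below π/4 : hi s = apt n (s+1) ≤ apt n (n-1) < π/4
      have hJs : J s = s := by simp only [hJ]; split_ifs <;> omega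
      have hne : s ≠ 2*n-2 := by omega
      have : hi s ≤ apt n (n-1) := by
        simp only [hhi, if_neg hne, hJs]
        exact apt_mono n (by omega)
      have h4 : apt n (n-1) < π/4 := apt_lt_pi_div_four n _ (by omega)
      linarith [hqin.2]
    · have hJs : J s = s + 1 := by simp only [hJ]; split_ifs <;> omega
      have : apt n n ≤ lo s := by
        simp only [hlo, hJs]
        exact apt_mono n (by omega)
      have h4 : π/4 < apt n n := pi_div_four_lt_apt n n (by omega)
      linarith [hqin.1]
  have hex : ∀ s, s < 2*n-1 → ∃ x, x ∈ Set.Ioo (lo s) (hi s) ∧ hfun n x = 0 := by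
    intro s hs
    exact ivt_zero (hfun_cont n) (hlohi s hs) (hsign s hs)
  choose! c hc1 hc2 using hex
  refine ⟨c, ?_, ?_⟩
  · intro s hs
    exact ⟨hmem s hs (hc1 s hs), fun hq => hquarter s hs (hq ▸ hc1 s hs), hc2 s hs⟩
  · intro s s' hss hs'
    have hs : s < 2*n-1 := lt_trans hss hs'
    have h1 : c s < hi s := (hc1 s hs).2
    have h2 : lo s' < c s' := (hc1 s' hs').1
    have h3 : hi s ≤ lo s' := by
      have hne : s ≠ 2*n-2 := by omega
      simp only [hhi, hlo, if_neg hne]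
      apply apt_mono
      simp only [hJ]; split_ifs <;> omega
    linarith

lemma pm1_root (n : ℕ) {ψ : ℝ} (h0 : 0 < ψ) (h2 : ψ < π/2) (hq : ψ ≠ π/4)
    (hz : hfun n ψ = 0) :
    aeval (Complex.exp ((2*ψ : ℝ) * Complex.I)) (Pm1 n) = 0 := by
  set z := Complex.exp ((2*ψ : ℝ) * Complex.I) with hzdef
  have hmain : (z^4 - 1) * (aeval z (Pm1 n)) = 0 := by
    rw [pm1_eval_c]
    rw [show z^(4*n+4) - z^(4*n+3) - z^(4*n+2) - z^(4*n+1) + z^3 + z^2 + z - 1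
      = 4 * Complex.I * (Complex.exp ((ψ:ℝ) * Complex.I))^(4*n+4) * (hfun n ψ) from Hval n ψ]
    rw [hz]
    simp
  have h4 : z^4 - 1 ≠ 0 := by
    intro hc
    have hz4 : z^4 = 1 := by linear_combination hc
    rw [hzdef, ← Complex.exp_nat_mul] at hz4
    rw [Complex.exp_eq_one_iff] at hz4
    obtain ⟨k, hk⟩ := hz4
    have hk2 : ((8*ψ : ℝ):ℂ) * Complex.I = ((k * (2*π) : ℝ):ℂ) * Complex.I := by
      push_cast at hk ⊢
      linear_combination hk
    have hkr : (8*ψ : ℝ) = k * (2*π) := by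
      have := mul_right_cancel₀ Complex.I_ne_zero hk2
      exact_mod_cast this
    have hπ := Real.pi_pos
    have hk1 : (k:ℝ) = 1 := by
      have h1 : (0:ℝ) < k * (2*π) := by rw [← hkr]; linarith
      have h2 : (k:ℝ) * (2*π) < 4*π := by rw [← hkr]; linarith
      have : (0:ℝ) < k := by nlinarith
      have : (k:ℝ) < 2 := by nlinarith
      have hk0 : (0:ℤ) < k := by exact_mod_cast ‹(0:ℝ) < (k:ℝ)›
      have hk2 : k < 2 := by exact_mod_cast ‹(k:ℝ) < 2›
      have : k = 1 := by omega
      exact_mod_cast this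
    apply hq
    rw [hk1, one_mul] at hkr
    linarith
  rcases mul_eq_zero.1 hmain with h | h
  · exact absurd h h4
  · exact h

lemma aeval_conj_int (p : ℤ[X]) (z : ℂ) :
    aeval ((starRingEnd ℂ) z) p = (starRingEnd ℂ) (aeval z p) := by
  rw [← aeval_map_algebraMap (A := ℝ) (B := ℂ) ((starRingEnd ℂ) z) p,
    ← aeval_map_algebraMap (A := ℝ) (B := ℂ) z p]
  exact aeval_conj _ _

lemma multiset_prod_le_one {s : Multiset ℝ} (h : ∀ x ∈ s, 0 ≤ x ∧ x ≤ 1) : s.prod ≤ 1 := by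
  induction s using Multiset.induction_on with
  | empty => simp
  | cons a t ih =>
    rw [Multiset.prod_cons]
    have ha := h a (Multiset.mem_cons_self a t)
    have ht : ∀ x ∈ t, 0 ≤ x ∧ x ≤ 1 := fun x hx => h x (Multiset.mem_cons_of_mem hx)
    have htp : t.prod ≤ 1 := ih ht
    have htp0 : 0 ≤ t.prod := Multiset.prod_nonneg (fun x hx => (ht x hx).1)
    nlinarith [ha.1, ha.2]

lemma roots_structure (n : ℕ) (hn : 1 ≤ n) (α α' : ℝ)
    (hα : α ∈ Set.Ioo (0:ℝ) 1) (hαr : aeval α (Pm1 n) = 0)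
    (hα' : 1 < α') (hα'r : aeval α' (Pm1 n) = 0) :
    ∃ T : Finset ℂ,
      ((Pm1 n).map (algebraMap ℤ ℂ)).roots = T.val ∧
      ((α:ℝ):ℂ) ∈ T ∧ ((α':ℝ):ℂ) ∈ T ∧
      (∀ z ∈ T, z ≠ ((α:ℝ):ℂ) → z ≠ ((α':ℝ):ℂ) → ‖z‖ = 1) := by
  classical
  obtain ⟨c, hc, hmono⟩ := exists_zeros n hn
  set m := 2*n-1 with hm
  set zf : ℕ → ℂ := fun s => Complex.exp ((2 * c s : ℝ) * Complex.I) with hzf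
  have hIm : ∀ s, s < m → 0 < (zf s).im := by
    intro s hs
    obtain ⟨⟨hc0, hc2⟩, hcq, hcz⟩ := hc s hs
    have him : (zf s).im = Real.sin (2 * c s) := Complex.exp_ofReal_mul_I_im (2 * c s)
    rw [him]
    apply Real.sin_pos_of_pos_of_lt_pi <;> linarith
  have hRe : ∀ s, (zf s).re = Real.cos (2 * c s) := by
    intro s; exact Complex.exp_ofReal_mul_I_re (2 * c s)
  have habs : ∀ s, ‖zf s‖ = 1 := by
    intro s; exact Complex.norm_exp_ofReal_mul_I (2 * c s)
  have hinj : Set.InjOn zf (Finset.range m) := by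
    intro s hs s' hs' heq
    simp only [Finset.coe_range, Set.mem_Iio] at hs hs'
    have hcos : Real.cos (2 * c s) = Real.cos (2 * c s') := by
      rw [← hRe s, ← hRe s', heq]
    have h2a := (hc s hs).1
    have h2b := (hc s' hs').1
    have hπ := Real.pi_pos
    have heqc : 2 * c s = 2 * c s' :=
      Real.injOn_cos ⟨by linarith [h2a.1], by linarith [h2a.2]⟩
        ⟨by linarith [h2b.1], by linarith [h2b.2]⟩ hcos
    by_contra hne
    rcases lt_trichotomy s s' with h | h | h
    · have := hmono s s' h hs'; linarith
    · exact hne h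
    · have := hmono s' s h hs; linarith
  set T1 := (Finset.range m).image zf with hT1
  set T2 := (Finset.range m).image (fun s => (starRingEnd ℂ) (zf s)) with hT2
  set T3 : Finset ℂ := {((α:ℝ):ℂ), ((α':ℝ):ℂ)} with hT3
  set T := (T1 ∪ T2) ∪ T3 with hT
  have hαne : ((α:ℝ):ℂ) ≠ ((α':ℝ):ℂ) := by
    intro hcon
    have : α = α' := by exact_mod_cast hcon
    rw [this] at hα
    linarith [hα.2]
  have hcT1 : T1.card = m := by
    rw [hT1, Finset.card_image_of_injOn hinj, Finset.card_range]
  have hcT2 : T2.card = m := by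
    rw [hT2, Finset.card_image_of_injOn ?_, Finset.card_range]
    intro s hs s' hs' heq
    exact hinj hs hs' ((starRingEnd ℂ).injective heq)
  have hT1mem : ∀ z ∈ T1, 0 < z.im := by
    intro z hz
    rw [hT1, Finset.mem_image] at hz
    obtain ⟨s, hs, rfl⟩ := hz
    exact hIm s (by simpa using hs)
  have hT2mem : ∀ z ∈ T2, z.im < 0 := by
    intro z hz
    rw [hT2, Finset.mem_image] at hz
    obtain ⟨s, hs, rfl⟩ := hz
    have := hIm s (by simpa using hs)
    simpa [Complex.conj_im] using this
  have hd12 : Disjoint T1 T2 := by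
    rw [Finset.disjoint_left]
    intro z h1 h2
    linarith [hT1mem z h1, hT2mem z h2]
  have hd3 : Disjoint (T1 ∪ T2) T3 := by
    rw [Finset.disjoint_left]
    intro z h1 h3
    have him0 : z.im = 0 := by
      rw [hT3] at h3
      rcases Finset.mem_insert.1 h3 with rfl | h3
      · simp
      · rw [Finset.mem_singleton] at h3; rw [h3]; simp
    rcases Finset.mem_union.1 h1 with h | h
    · linarith [hT1mem z h]
    · linarith [hT2mem z h]
  have hcT3 : T3.card = 2 := by
    rw [hT3, Finset.card_insert_of_notMem (by simp [hαne]), Finset.card_singleton]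
  have hcT : T.card = 4*n := by
    rw [hT, Finset.card_union_of_disjoint hd3, Finset.card_union_of_disjoint hd12,
      hcT1, hcT2, hcT3]
    omega
  set Pc := (Pm1 n).map (algebraMap ℤ ℂ) with hPc
  have hPcm : Pc.Monic := (pm1_monic n).1.map _
  have hPcne : Pc ≠ 0 := hPcm.ne_zero
  have hPcdeg : Pc.natDegree = 4*n := by
    rw [hPc, (pm1_monic n).1.natDegree_map, (pm1_monic n).2]
  have hTsub : T ⊆ Pc.roots.toFinset := by
    intro z hz
    rw [Multiset.mem_toFinset, mem_roots hPcne]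
    rw [IsRoot.def, hPc, eval_map_algebraMap]
    rcases Finset.mem_union.1 hz with h12 | h3
    · rcases Finset.mem_union.1 h12 with h | h
      · rw [hT1, Finset.mem_image] at h
        obtain ⟨s, hs, rfl⟩ := h
        simp only [Finset.mem_range] at hs
        obtain ⟨⟨hc0, hc2⟩, hcq, hcz⟩ := hc s hs
        exact pm1_root n hc0 hc2 hcq hcz
      · rw [hT2, Finset.mem_image] at h
        obtain ⟨s, hs, rfl⟩ := h
        simp only [Finset.mem_range] at hs
        obtain ⟨⟨hc0, hc2⟩, hcq, hcz⟩ := hc s hs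
        rw [aeval_conj_int, pm1_root n hc0 hc2 hcq hcz, map_zero]
    · rw [hT3] at h3
      rcases Finset.mem_insert.1 h3 with rfl | h3
      · rw [show ((α:ℝ):ℂ) = algebraMap ℝ ℂ α from rfl, aeval_algebraMap_apply, hαr, map_zero]
      · rw [Finset.mem_singleton] at h3
        rw [h3, show ((α':ℝ):ℂ) = algebraMap ℝ ℂ α' from rfl, aeval_algebraMap_apply, hα'r,
          map_zero]
  have hcard1 : Pc.roots.toFinset.card ≤ Multiset.card Pc.roots := Multiset.toFinset_card_le _
  have hcard2 : Multiset.card Pc.roots ≤ 4*n := hPcdeg ▸ Pc.card_roots'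
  have hTeq : T = Pc.roots.toFinset := by
    apply Finset.eq_of_subset_of_card_le hTsub
    omega
  have hnodup : Pc.roots.Nodup := by
    rw [← Multiset.toFinset_card_eq_card_iff_nodup]
    have : Pc.roots.toFinset.card = 4*n := by rw [← hTeq]; exact hcT
    omega
  refine ⟨T, ?_, ?_, ?_, ?_⟩
  · rw [hTeq]
    rw [Multiset.toFinset_val, Multiset.dedup_eq_self.mpr hnodup]
  · rw [hT]
    exact Finset.mem_union_right _ (by rw [hT3]; exact Finset.mem_insert_self _ _)
  · rw [hT]
    exact Finset.mem_union_right _ (by rw [hT3]; simp)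
  · intro z hz hzα hzα'
    rcases Finset.mem_union.1 hz with h12 | h3
    · rcases Finset.mem_union.1 h12 with h | h
      · rw [hT1, Finset.mem_image] at h
        obtain ⟨s, hs, rfl⟩ := h
        exact habs s
      · rw [hT2, Finset.mem_image] at h
        obtain ⟨s, hs, rfl⟩ := h
        rw [Complex.norm_conj]
        exact habs s
    · rw [hT3] at h3
      rcases Finset.mem_insert.1 h3 with rfl | h3
      · exact absurd rfl hzα
      · rw [Finset.mem_singleton] at h3
        exact absurd h3 hzα'

/-- If `P_k = P_{k,1} ⋯ P_{k,r}` is a factorization into irreducibles in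
`ℤ[q]` and `P_{k,1}(α) = 0` for the unique root `α ∈ (0,1)`, then `P_{k,1}(α') = 0` for the
unique root `α' > 1`, and every complex root of each `P_{k,i}`, `i ≥ 2`, is a root of unity. -/
theorem stmt_6 (k : ℕ) (α α' : ℝ)
    (hα : α ∈ Set.Ioo (0 : ℝ) 1) (hαr : Polynomial.aeval α (Pm1 (k + 1)) = 0)
    (hα' : 1 < α') (hα'r : Polynomial.aeval α' (Pm1 (k + 1)) = 0)
    (r : ℕ) (F : Fin (r + 1) → Polynomial ℤ)
    (hirr : ∀ i, Irreducible (F i))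
    (hprod : Pm1 (k + 1) = ∏ i, F i)
    (h1 : Polynomial.aeval α (F 0) = 0) :
    Polynomial.aeval α' (F 0) = 0 ∧
    ∀ i, i ≠ 0 → ∀ β : ℂ, Polynomial.aeval β (F i) = 0 →
      ∃ N : ℕ, 0 < N ∧ β ^ N = 1 := by
  classical
  set n := k + 1 with hn
  obtain ⟨T, hroots, hTα, hTα', habs⟩ :=
    roots_structure n (by omega) α α' hα hαr hα' hα'r
  set Pc := (Pm1 n).map (algebraMap ℤ ℂ) with hPc
  have hPcm : Pc.Monic := (pm1_monic n).1.map _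
  have hPcne : Pc ≠ 0 := hPcm.ne_zero
  have hFne : ∀ i, F i ≠ 0 := fun i => (hirr i).ne_zero
  set Fc : Fin (r+1) → Polynomial ℂ := fun i => (F i).map (algebraMap ℤ ℂ) with hFc
  have hFcne : ∀ i, Fc i ≠ 0 := by
    intro i
    simp only [hFc]
    rw [Ne, Polynomial.map_eq_zero_iff (by exact_mod_cast Int.cast_injective)]
    exact hFne i
  have hdvd : ∀ i, F i ∣ Pm1 n := by
    intro i
    rw [hprod]
    exact Finset.dvd_prod_of_mem F (Finset.mem_univ i)
  have hrootsle : ∀ i, (Fc i).roots ≤ Pc.roots := by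
    intro i
    exact roots.le_of_dvd hPcne (Polynomial.map_dvd _ (hdvd i))
  have hmemT : ∀ {z : ℂ}, z ∈ Pc.roots → z ∈ T := by
    intro z hz
    rw [hroots] at hz
    exact hz
  have hnodup : Pc.roots.Nodup := by rw [hroots]; exact T.nodup
  have hlead : ∀ i, IsUnit ((F i).leadingCoeff) := by
    intro i
    have h1' : ∏ j, (F j).leadingCoeff = 1 := by
      rw [← leadingCoeff_prod, ← hprod]
      exact (pm1_monic n).1
    exact isUnit_of_dvd_one (h1' ▸ Finset.dvd_prod_of_mem _ (Finset.mem_univ i))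
  have heval0 : ∀ i, IsUnit ((F i).eval 0) := by
    intro i
    have h1' : ∏ j, (F j).eval 0 = 1 := by
      rw [← eval_prod, ← hprod]
      exact pm1_eval_zero n
    exact isUnit_of_dvd_one (h1' ▸ Finset.dvd_prod_of_mem _ (Finset.mem_univ i))
  -- roots of Fc i are in T
  have hFrootsT : ∀ i, ∀ z ∈ (Fc i).roots, z ∈ T := by
    intro i z hz
    exact hmemT (Multiset.mem_of_le (hrootsle i) hz)
  -- eval of mapped at complex point zero
  have hFceval0 : ∀ i, ‖(Fc i).eval 0‖ = 1 := by
    intro i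
    have : (Fc i).eval 0 = algebraMap ℤ ℂ ((F i).eval 0) := by
      simp only [hFc]
      rw [eval_map_algebraMap]
      rw [show (0:ℂ) = algebraMap ℤ ℂ (0:ℤ) by simp, aeval_algebraMap_apply]
      simp [aeval_def, coeff_zero_eq_eval_zero]
    rw [this]
    rcases Int.isUnit_iff.1 (heval0 i) with h | h <;> rw [h] <;> simp
  have hFclead : ∀ i, ‖(Fc i).leadingCoeff‖ = 1 := by
    intro i
    have : (Fc i).leadingCoeff = algebraMap ℤ ℂ ((F i).leadingCoeff) := by
      simp only [hFc]
      exact leadingCoeff_map_of_injective (by exact_mod_cast Int.cast_injective) _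
    rw [this]
    rcases Int.isUnit_iff.1 (hlead i) with h | h <;> rw [h] <;> simp
  -- the product of absolute values of roots of any Fc i is 1
  have hprodabs : ∀ i, (((Fc i).roots).map norm).prod = 1 := by
    intro i
    have hnp : ∀ s : Multiset ℂ, ‖s.prod‖ = (s.map norm).prod := fun s => by
      induction s using Multiset.induction_on <;> simp [*]
    have hsplit : Fc i = C ((Fc i).leadingCoeff) *
        (((Fc i).roots).map (fun a => X - C a)).prod :=
      (IsAlgClosed.splits _).eq_prod_roots
    have hev : (Fc i).eval 0 = (Fc i).leadingCoeff *
        (((Fc i).roots).map (fun a => -a)).prod := by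
      conv_lhs => rw [hsplit]
      rw [eval_mul, eval_C, eval_multiset_prod, Multiset.map_map]
      have hmapeq : Multiset.map (eval 0 ∘ fun a => X - C a) (Fc i).roots
          = Multiset.map (fun a => -a) (Fc i).roots :=
        Multiset.map_congr rfl (by intro a _; simp)
      rw [hmapeq]
    have habseq := congrArg norm hev
    rw [hFceval0 i, norm_mul, hFclead i, one_mul, hnp, Multiset.map_map] at habseq
    have hmapeq2 : Multiset.map (norm ∘ fun a => -a) (Fc i).roots
        = Multiset.map norm (Fc i).roots :=
      Multiset.map_congr rfl (by intro a _; simp)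
    rw [hmapeq2] at habseq
    exact habseq.symm
  -- Part 1 : α' is a root of F 0
  have hαc : ((α:ℝ):ℂ) ∈ (Fc 0).roots := by
    rw [mem_roots (hFcne 0), IsRoot.def]
    simp only [hFc]
    rw [eval_map_algebraMap,
      show ((α:ℝ):ℂ) = algebraMap ℝ ℂ α from rfl, aeval_algebraMap_apply, h1, map_zero]
  have part1c : ((α':ℝ):ℂ) ∈ (Fc 0).roots := by
    by_contra hnot
    have hcons := Multiset.cons_erase hαc
    have hprod1 := hprodabs 0
    rw [← hcons, Multiset.map_cons, Multiset.prod_cons] at hprod1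
    have habsα : ‖((α:ℝ):ℂ)‖ = α := by
      rw [Complex.norm_of_nonneg hα.1.le]
    rw [habsα] at hprod1
    have hrest : ((((Fc 0).roots.erase ((α:ℝ):ℂ))).map norm).prod ≤ 1 := by
      apply multiset_prod_le_one
      intro x hx
      rw [Multiset.mem_map] at hx
      obtain ⟨z, hz, rfl⟩ := hx
      have hzT : z ∈ T := hFrootsT 0 z (Multiset.mem_of_mem_erase hz)
      constructor
      · exact norm_nonneg z
      by_cases hzα : z = ((α:ℝ):ℂ)
      · rw [hzα, habsα]; exact le_of_lt hα.2
      by_cases hzα' : z = ((α':ℝ):ℂ)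
      · exfalso; exact hnot (hzα' ▸ Multiset.mem_of_mem_erase hz)
      · rw [habs z hzT hzα hzα']
    nlinarith [hα.1, hα.2]
  have part1 : Polynomial.aeval α' (F 0) = 0 := by
    have : Polynomial.aeval ((α':ℝ):ℂ) (F 0) = 0 := by
      have := (mem_roots (hFcne 0)).1 part1c
      rw [IsRoot.def] at this
      simp only [hFc] at this
      rwa [eval_map_algebraMap] at this
    rw [show ((α':ℝ):ℂ) = algebraMap ℝ ℂ α' from rfl, aeval_algebraMap_eq_zero_iff] at this
    exact this
  refine ⟨part1, ?_⟩
  -- Part 2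
  intro i hi β hβ
  have hdisj : ∀ γ : ℂ, γ ∈ (Fc 0).roots → γ ∉ (Fc i).roots := by
    intro γ h0 hti
    have hpair : F 0 * F i = ∏ j ∈ ({0, i} : Finset (Fin (r+1))), F j := by
      rw [Finset.prod_pair (Ne.symm hi)]
    have hdvd2 : F 0 * F i ∣ Pm1 n := by
      rw [hpair, hprod]
      exact Finset.prod_dvd_prod_of_subset _ _ F (Finset.subset_univ _)
    have hrle : (Fc 0 * Fc i).roots ≤ Pc.roots := by
      have hmm : (Fc 0) * (Fc i) = (F 0 * F i).map (algebraMap ℤ ℂ) := by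
        simp only [hFc, Polynomial.map_mul]
      rw [hmm]
      exact roots.le_of_dvd hPcne (Polynomial.map_dvd _ hdvd2)
    have hcount : 2 ≤ Multiset.count γ ((Fc 0 * Fc i).roots) := by
      rw [roots_mul (mul_ne_zero (hFcne 0) (hFcne i)), Multiset.count_add]
      have c1 : 1 ≤ Multiset.count γ (Fc 0).roots := Multiset.one_le_count_iff_mem.2 h0
      have c2 : 1 ≤ Multiset.count γ (Fc i).roots := Multiset.one_le_count_iff_mem.2 hti
      omega
    have hc1 : Multiset.count γ Pc.roots ≤ 1 := (Multiset.nodup_iff_count_le_one.1 hnodup) γ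
    have hc2 := Multiset.count_le_of_le γ hrle
    omega
  have habsi : ∀ γ ∈ (Fc i).roots, ‖γ‖ = 1 := by
    intro γ hγ
    have hγT := hFrootsT i γ hγ
    apply habs γ hγT
    · intro hc; exact hdisj _ hαc (hc ▸ hγ)
    · intro hc; exact hdisj _ part1c (hc ▸ hγ)
  set g := C ((F i).leadingCoeff) * F i with hg
  have hlu := Int.isUnit_iff.1 (hlead i)
  have hgmonic : g.Monic := by
    unfold Polynomial.Monic
    rw [hg, leadingCoeff_mul, leadingCoeff_C]
    rcases hlu with h | h <;> rw [h] <;> norm_num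
  have hgβ : Polynomial.aeval β g = 0 := by rw [hg, map_mul, aeval_C, hβ, mul_zero]
  have hβint : IsIntegral ℤ β := ⟨g, hgmonic, by rwa [← aeval_def]⟩
  set K := IntermediateField.adjoin ℚ {β} with hK
  haveI : FiniteDimensional ℚ K :=
    IntermediateField.adjoin.finiteDimensional (hβint.tower_top)
  haveI : NumberField K := ⟨⟩
  set x : K := IntermediateField.AdjoinSimple.gen ℚ β with hx
  have hxβ : algebraMap K ℂ x = β := IntermediateField.AdjoinSimple.algebraMap_gen ℚ β
  have hxint : IsIntegral ℤ x := by
    rw [← isIntegral_algebraMap_iff (algebraMap K ℂ).injective, hxβ]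
    exact hβint
  have hnorm : ∀ φ : K →+* ℂ, ‖φ x‖ = 1 := by
    intro φ
    have hmin : minpoly ℚ x = minpoly ℚ β := IntermediateField.minpoly_gen ℚ β
    have h0 : Polynomial.aeval (φ x) (minpoly ℚ β) = 0 := by
      rw [← hmin]
      have happ := Polynomial.aeval_algHom_apply φ.toRatAlgHom x (minpoly ℚ x)
      rw [minpoly.aeval, map_zero] at happ
      rw [show φ x = φ.toRatAlgHom x from rfl]
      exact happ
    have hdvdg : minpoly ℚ β ∣ g.map (algebraMap ℤ ℚ) := by
      apply minpoly.dvd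
      rw [aeval_map_algebraMap]
      exact hgβ
    have hφroot : Polynomial.aeval (φ x) (g.map (algebraMap ℤ ℚ)) = 0 := by
      obtain ⟨q, hq⟩ := hdvdg
      rw [hq, map_mul, h0, zero_mul]
    have hφ2 : Polynomial.aeval (φ x) (F i) = 0 := by
      rw [aeval_map_algebraMap, hg, map_mul, aeval_C] at hφroot
      rcases hlu with h | h <;> rw [h] at hφroot <;> simpa using hφroot
    have hφmem : φ x ∈ (Fc i).roots := by
      rw [mem_roots (hFcne i), IsRoot.def]
      simp only [hFc]
      rw [eval_map_algebraMap]
      exact hφ2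
    exact habsi _ hφmem
  obtain ⟨N, hN, hxN⟩ :=
    NumberField.Embeddings.pow_eq_one_of_norm_eq_one (K := K) (A := ℂ) hxint hnorm
  refine ⟨N, hN, ?_⟩
  rw [← hxβ, ← map_pow, hxN, map_one]
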